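/- Let G be a graph with a distinct token on each vertex, and let σ be a swap sequence taking an initial token placement to a final token placement. If some pair of tokens swap with each other more than once during σ, then there exists a swap sequence of length |σ|−2 taking the same initial placement to the same final placement. -/

import Mathlib

/-!
STATEMENT 0: Let G be a graph with a distinct token on each vertex, and let σ be a
swap sequence taking an initial token placement to a final token placement.  If some
pair of tokens swap with each other more than once during σ, then there exists a swap
sequence of length |σ|−2 taking the same initial placement to the same final placement.

Tokens form an arbitrary type `T`; a placement is a bijection `T ≃ V` (a distinct token
on each vertex).  A swap on an edge `(u,v)` exchanges the tokens at `u` and `v`, i.e.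
post-composes the placement with `Equiv.swap u v`.
-/

namespace Stmt0

/-- Apply a sequence of swaps (given by the pairs of endpoints) to a placement. -/
def applySeq {T V : Type*} [DecidableEq V] (σ : List (V × V)) (p : T ≃ V) : T ≃ V :=
  σ.foldl (fun q e => q.trans (Equiv.swap e.1 e.2)) p

/-- The placement after the first `i` swaps of `σ`. -/
def placeAfter {T V : Type*} [DecidableEq V] (σ : List (V × V)) (p : T ≃ V) (i : ℕ) : T ≃ V :=
  applySeq (σ.take i) p

/-- The (unordered) pair of tokens exchanged by the `i`-th swap of `σ`. -/
def swappedPair {T V : Type*} [DecidableEq V] (σ : List (V × V)) (p : T ≃ V)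
    (i : Fin σ.length) : Sym2 T :=
  s((placeAfter σ p i).symm (σ.get i).1, (placeAfter σ p i).symm (σ.get i).2)

lemma applySeq_append {T V : Type*} [DecidableEq V] (σ τ : List (V × V)) (p : T ≃ V) :
    applySeq (σ ++ τ) p = applySeq τ (applySeq σ p) := List.foldl_append ..

lemma applySeq_cons {T V : Type*} [DecidableEq V] (e : V × V) (σ : List (V × V)) (p : T ≃ V) :
    applySeq (e :: σ) p = applySeq σ (p.trans (Equiv.swap e.1 e.2)) := rfl

lemma applySeq_trans {T V : Type*} [DecidableEq V] (σ : List (V × V)) (a : T ≃ V)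
    (b : V ≃ V) : applySeq σ ((a : T ≃ V).trans b) = a.trans (applySeq σ b) := by
  induction σ generalizing b with
  | nil => rfl
  | cons e σ ih => simp [applySeq_cons, Equiv.trans_assoc, ih]

lemma applySeq_eq {T V : Type*} [DecidableEq V] (σ : List (V × V)) (p : T ≃ V) :
    applySeq σ p = p.trans (applySeq σ (Equiv.refl V)) := by
  rw [← applySeq_trans, Equiv.trans_refl]

theorem no_repeated_swap_in_shortest {T V : Type*} [DecidableEq V] (G : SimpleGraph V)
    (σ : List (V × V)) (hσ : ∀ e ∈ σ, G.Adj e.1 e.2)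
    (p₀ : T ≃ V)
    (i j : Fin σ.length) (hij : i < j)
    (hpair : swappedPair σ p₀ i = swappedPair σ p₀ j) :
    ∃ σ' : List (V × V), (∀ e ∈ σ', G.Adj e.1 e.2) ∧ σ'.length = σ.length - 2 ∧
      applySeq σ' p₀ = applySeq σ p₀ := by
  classical
  have hi : (i : ℕ) < σ.length := i.isLt
  have hj : (j : ℕ) < σ.length := j.isLt
  have hijn : (i : ℕ) < (j : ℕ) := hij
  set A : List (V × V) := σ.take i with hA
  set gi : V × V := σ.get i with hgi
  set M : List (V × V) := (σ.drop (i + 1)).take ((j : ℕ) - i - 1) with hM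
  set gj : V × V := σ.get j with hgj
  set C : List (V × V) := σ.drop ((j : ℕ) + 1) with hC
  have hlenA : A.length = (i : ℕ) := by
    simp only [hA, List.length_take]; omega
  have hlenM : M.length = (j : ℕ) - (i : ℕ) - 1 := by
    simp only [hM, List.length_take, List.length_drop]; omega
  have hlenC : C.length = σ.length - ((j : ℕ) + 1) := by
    simp [hC]
  have hdropi : σ.drop (i : ℕ) = gi :: σ.drop ((i : ℕ) + 1) := by
    rw [hgi, List.get_eq_getElem, List.drop_eq_getElem_cons hi]
  have hdropj : σ.drop (j : ℕ) = gj :: C := by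
    rw [hgj, hC, List.get_eq_getElem, List.drop_eq_getElem_cons hj]
  have hdropi1 : σ.drop ((i : ℕ) + 1) = M ++ gj :: C := by
    conv_lhs => rw [← List.take_append_drop ((j : ℕ) - (i : ℕ) - 1) (σ.drop ((i : ℕ) + 1))]
    rw [← hM, List.drop_drop]
    have h : ((i : ℕ) + 1) + ((j : ℕ) - (i : ℕ) - 1) = (j : ℕ) := by omega
    rw [h, hdropj]
  have hdecomp : σ = A ++ gi :: (M ++ gj :: C) := by
    conv_lhs => rw [← List.take_append_drop (i : ℕ) σ, hdropi, hdropi1]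
  refine ⟨A ++ (M ++ C), ?_, ?_, ?_⟩
  · intro e he
    apply hσ
    rw [List.mem_append, List.mem_append] at he
    rcases he with h | h | h
    · exact List.mem_of_mem_take h
    · exact List.mem_of_mem_drop (List.mem_of_mem_take h)
    · exact List.mem_of_mem_drop h
  · simp only [List.length_append]
    omega
  · -- the swap identity
    have htakej : σ.take (j : ℕ) = A ++ gi :: M := by
      have hlen : (A ++ gi :: M).length = (j : ℕ) := by
        simp [hlenA, hlenM]; omega
      have e1 : σ.take (j : ℕ) = (A ++ gi :: (M ++ gj :: C)).take (j : ℕ) := by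
        rw [← hdecomp]
      have h : A ++ gi :: (M ++ gj :: C) = (A ++ gi :: M) ++ gj :: C := by simp
      rw [e1, h, List.take_left' hlen]
    set q : T ≃ V := applySeq A p₀ with hq
    set Si : V ≃ V := Equiv.swap gi.1 gi.2 with hSi
    set Sj : V ≃ V := Equiv.swap gj.1 gj.2 with hSj
    set PM : V ≃ V := applySeq M (Equiv.refl V) with hPM
    have hqi : placeAfter σ p₀ (i : ℕ) = q := rfl
    have hqj : placeAfter σ p₀ (j : ℕ) = (q.trans Si).trans PM := by
      rw [placeAfter, htakej, applySeq_append, applySeq_cons, ← hq, ← hSi, applySeq_eq, ← hPM]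
    set qj : T ≃ V := (q.trans Si).trans PM with hqjdef
    -- extract the swap equality from hpair
    have hswap : Equiv.swap (q.symm gi.1) (q.symm gi.2)
        = Equiv.swap (qj.symm gj.1) (qj.symm gj.2) := by
      have h := hpair
      rw [swappedPair, swappedPair, hqi, hqj, ← hgi, ← hgj, Sym2.eq_iff] at h
      rcases h with ⟨h1, h2⟩ | ⟨h1, h2⟩
      · rw [h1, h2]
      · rw [h1, h2, Equiv.swap_comm]
    -- pointwise consequence
    have hkey : ∀ t : T, Sj (qj t) = qj (q.symm (Si (q t))) := by
      intro t
      have h1 : Equiv.swap (q.symm gi.1) (q.symm gi.2) t = q.symm (Si (q t)) := by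
        rw [← Equiv.trans_swap_trans_symm]; rfl
      have h2 : Equiv.swap (qj.symm gj.1) (qj.symm gj.2) t = qj.symm (Sj (qj t)) := by
        rw [← Equiv.trans_swap_trans_symm]; rfl
      have h3 : q.symm (Si (q t)) = qj.symm (Sj (qj t)) := by
        rw [← h1, ← h2, hswap]
      have h4 := congrArg qj h3
      rw [Equiv.apply_symm_apply] at h4
      exact h4.symm
    -- final computation
    rw [hdecomp]
    simp only [applySeq_append, applySeq_cons]
    congr 1
    rw [← hq, ← hSi, ← hSj, applySeq_eq M (q.trans Si), applySeq_eq M q, ← hPM]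
    ext t
    have h5 := hkey t
    have h6 : qj t = PM (Si (q t)) := rfl
    rw [h6] at h5
    simp only [Equiv.trans_apply]
    rw [h5]
    simp only [hqjdef, hSi, Equiv.trans_apply, Equiv.apply_symm_apply, Equiv.swap_apply_self]

end Stmt0
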